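/- First-order optimality condition for the single-impression risk minimization: fix N ≥ 1, and for each i ∈ Fin N reals r i, a i > 0, c i ≥ 0, b i > 0 with c i ≤ b i, and a value function v i : ℝ → ℝ that is concave and differentiable. Consider maximizing F(x) = ∑ i, ( r i * x i + v i (b i - c i - a i * x i) ) over x : Fin N → ℝ subject to x i ≥ 0 for all i, ∑ i, x i ≤ 1, and b i - c i - a i * x i ≥ 0 for all i. If x* is a maximizer, i ∈ Fin N satisfies x* i > 0, and k ∈ Fin N satisfies b k - c k - a k * x* k > 0, then r i - a i * v i'(b i - c i - a i * x* i) ≥ r k - a k * v k'(b k - c k - a k * x* k). -/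

import Mathlib

open Topology Filter


/-- first-order optimality condition for the single-impression risk
minimization. At a maximizer `x*` of
`F(x) = ∑ i, (r i * x i + v i (b i - c i - a i * x i))` over the feasible set, if
`x* i > 0` and the budget constraint of `k` is slack, then the dual-adjusted bid of `i`
dominates that of `k`. -/
theorem stmt17 (N : ℕ) (hN : 1 ≤ N)
    (r a c b : Fin N → ℝ)
    (hr : ∀ i, 0 < r i) (ha : ∀ i, 0 < a i) (hc : ∀ i, 0 ≤ c i)
    (hb : ∀ i, 0 < b i) (hcb : ∀ i, c i ≤ b i)
    (v : Fin N → ℝ → ℝ)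
    (hconc : ∀ i, ConcaveOn ℝ Set.univ (v i))
    (hdiff : ∀ i, Differentiable ℝ (v i))
    (xs : Fin N → ℝ)
    (hfeas : (∀ i, 0 ≤ xs i) ∧ (∑ i, xs i ≤ 1) ∧ ∀ i, 0 ≤ b i - c i - a i * xs i)
    (hmax : ∀ x : Fin N → ℝ, (∀ i, 0 ≤ x i) → (∑ i, x i ≤ 1) →
      (∀ i, 0 ≤ b i - c i - a i * x i) →
      ∑ i, (r i * x i + v i (b i - c i - a i * x i)) ≤
        ∑ i, (r i * xs i + v i (b i - c i - a i * xs i)))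
    (i k : Fin N) (hi : 0 < xs i) (hk : 0 < b k - c k - a k * xs k) :
    r k - a k * deriv (v k) (b k - c k - a k * xs k) ≤
      r i - a i * deriv (v i) (b i - c i - a i * xs i) := by
  rcases eq_or_ne i k with rfl | hik
  · exact le_rfl
  obtain ⟨hx0, hsum, hbud⟩ := hfeas
  set Bi := b i - c i - a i * xs i with hBi
  set Bk := b k - c k - a k * xs k with hBk
  set ε := min (xs i) (Bk / a k) with hεdef
  have hεpos : 0 < ε := lt_min hi (div_pos hk (ha k))
  set h : ℝ → ℝ := fun t => (r k - r i) * t + v i (Bi + a i * t) + v k (Bk - a k * t)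
    with hhdef
  -- Step 1: h t ≤ h 0 for t ∈ (0, ε]
  have key : ∀ t ∈ Set.Ioc (0:ℝ) ε, h t ≤ h 0 := by
    intro t ht
    obtain ⟨ht0, htε⟩ := ht
    have hti : t ≤ xs i := htε.trans (min_le_left _ _)
    have htk : a k * t ≤ Bk := by
      have := htε.trans (min_le_right _ _)
      rw [le_div_iff₀ (ha k)] at this
      linarith [this]
    set x' : Fin N → ℝ :=
      fun j => xs j + (if j = k then t else 0) - (if j = i then t else 0) with hx'def
    have hx'0 : ∀ j, 0 ≤ x' j := by
      intro j
      by_cases hji : j = i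
      · subst hji
        simp only [hx'def, eq_self_iff_true, if_true, if_neg hik]
        linarith
      · by_cases hjk : j = k
        · subst hjk
          simp only [hx'def, eq_self_iff_true, if_true, if_neg hji]
          linarith [hx0 j]
        · simp only [hx'def, if_neg hji, if_neg hjk]
          linarith [hx0 j]
    have hsum' : ∑ j, x' j ≤ 1 := by
      have : ∑ j, x' j = ∑ j, xs j := by
        simp [hx'def, Finset.sum_add_distrib, Finset.sum_sub_distrib,
          Finset.sum_ite_eq']
      rw [this]; exact hsum
    have hbud' : ∀ j, 0 ≤ b j - c j - a j * x' j := by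
      intro j
      by_cases hji : j = i
      · subst hji
        simp only [hx'def, eq_self_iff_true, if_true, if_neg hik]
        have h1 : 0 ≤ a j * t := mul_nonneg (ha j).le ht0.le
        have h2 := hbud j
        nlinarith
      · by_cases hjk : j = k
        · subst hjk
          simp only [hx'def, eq_self_iff_true, if_true, if_neg hji]
          have : b j - c j - a j * (xs j + t - 0) = Bk - a j * t := by
            rw [hBk]; ring
          rw [this]
          linarith
        · simp only [hx'def, if_neg hji, if_neg hjk]
          have := hbud j
          linarith
    have hF := hmax x' hx'0 hsum' hbud'
    have hsplit : ∀ j, r j * x' j + v j (b j - c j - a j * x' j)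
        = (r j * xs j + v j (b j - c j - a j * xs j))
          + ((if j = i then (v i (Bi + a i * t) - v i Bi - r i * t) else 0)
            + (if j = k then (r k * t + v k (Bk - a k * t) - v k Bk) else 0)) := by
      intro j
      by_cases hji : j = i
      · subst hji
        simp only [hx'def, eq_self_iff_true, if_true, if_neg hik]
        have harg : b j - c j - a j * (xs j + 0 - t) = Bi + a j * t := by
          rw [hBi]; ring
        rw [harg]
        ring
      · by_cases hjk : j = k
        · subst hjk
          simp only [hx'def, eq_self_iff_true, if_true, if_neg hji]
          have harg : b j - c j - a j * (xs j + t - 0) = Bk - a j * t := by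
            rw [hBk]; ring
          rw [harg]
          ring
        · simp only [hx'def, if_neg hji, if_neg hjk]
          ring
    rw [Finset.sum_congr rfl (fun j _ => hsplit j)] at hF
    simp only [Finset.sum_add_distrib, Finset.sum_ite_eq', Finset.mem_univ,
      if_true] at hF
    simp only [hhdef]
    have h0 : (r k - r i) * 0 + v i (Bi + a i * 0) + v k (Bk - a k * 0)
        = v i Bi + v k Bk := by ring_nf
    rw [h0]
    linarith
  -- Step 2: compute the derivative of h at 0
  have hd1 : HasDerivAt (fun t : ℝ => Bi + a i * t) (a i) 0 := by
    simpa using ((hasDerivAt_id (0:ℝ)).const_mul (a i)).const_add Bi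
  have hd2 : HasDerivAt (fun t : ℝ => Bk - a k * t) (-(a k)) 0 := by
    have := (((hasDerivAt_id (0:ℝ)).const_mul (a k)).neg).const_add Bk
    simpa [sub_eq_add_neg] using this
  have hvi : HasDerivAt (fun t : ℝ => v i (Bi + a i * t)) (deriv (v i) Bi * a i) 0 := by
    have hv := ((hdiff i) (Bi + a i * 0)).hasDerivAt
    have := hv.comp 0 hd1
    simpa [Function.comp_def] using this
  have hvk : HasDerivAt (fun t : ℝ => v k (Bk - a k * t))
      (deriv (v k) Bk * (-(a k))) 0 := by
    have hv := ((hdiff k) (Bk - a k * 0)).hasDerivAt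
    have := hv.comp 0 hd2
    simpa [Function.comp_def] using this
  have hlin : HasDerivAt (fun t : ℝ => (r k - r i) * t) (r k - r i) 0 := by
    simpa using (hasDerivAt_id (0:ℝ)).const_mul (r k - r i)
  have hD : HasDerivAt h
      ((r k - r i) + deriv (v i) Bi * a i + deriv (v k) Bk * (-(a k))) 0 :=
    (hlin.add hvi).add hvk
  -- Step 3: the right derivative at the maximum is ≤ 0
  rw [hasDerivAt_iff_tendsto_slope] at hD
  have hmono : 𝓝[>] (0:ℝ) ≤ 𝓝[≠] (0:ℝ) :=
    nhdsWithin_mono _ (fun x hx => ne_of_gt hx)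
  have htend := hD.mono_left hmono
  have hDle : (r k - r i) + deriv (v i) Bi * a i + deriv (v k) Bk * (-(a k)) ≤ 0 := by
    refine le_of_tendsto htend ?_
    filter_upwards [Ioc_mem_nhdsGT_of_mem ⟨le_refl (0:ℝ), hεpos⟩] with t ht
    have hle := key t ht
    have ht0 := ht.1
    rw [slope_def_field]
    have : (h t - h 0) / (t - 0) ≤ 0 := by
      apply div_nonpos_of_nonpos_of_nonneg <;> linarith
    simpa [div_eq_inv_mul] using this
  nlinarith [hDle]
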